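/- Let w be a periodic bi-infinite word over a finite alphabet A. Then the set of all minimal forbidden words of w defines w. -/

import Mathlib

/-- `u` is a (finite) factor of the bi-infinite word `w`. -/
def IsFactor {A : Type} (w : ℤ → A) (u : List A) : Prop :=
  ∃ i : ℤ, u = (List.range u.length).map fun j => w (i + j)

/-- `w'` is a shift of `w`. -/
def IsShift {A : Type} (w' w : ℤ → A) : Prop :=
  ∃ t : ℤ, ∀ i : ℤ, w' i = w (i + t)

/-- A set `S` of finite words defines the bi-infinite word `w`. -/
def Defines {A : Type} (S : Set (List A)) (w : ℤ → A) : Prop :=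
  (∀ u ∈ S, ¬ IsFactor w u) ∧
  ∀ w' : ℤ → A, (∀ u ∈ S, ¬ IsFactor w' u) → IsShift w' w

/-- `w` has period `n`. -/
def HasPeriod {A : Type} (w : ℤ → A) (n : ℕ) : Prop :=
  ∀ i : ℤ, w (i + n) = w i

/-- `n` is the least period of `w`. -/
def IsLeastPeriod {A : Type} (w : ℤ → A) (n : ℕ) : Prop :=
  1 ≤ n ∧ HasPeriod w n ∧ ∀ m : ℕ, 1 ≤ m → HasPeriod w m → n ≤ m

/-- `u` is a minimal forbidden word of `w`: it is not a factor of `w`, but every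
proper factor of `u` is a factor of `w`. -/
def MinForbidden {A : Type} (w : ℤ → A) (u : List A) : Prop :=
  ¬ IsFactor w u ∧ ∀ v : List A, v <:+: u → v ≠ u → IsFactor w v

/-- The factor of `w` starting at `i` of length `L`. -/
def seg {A : Type} (w : ℤ → A) (i : ℤ) (L : ℕ) : List A :=
  (List.range L).map fun j => w (i + j)

lemma seg_eq {A : Type} (w : ℤ → A) (i : ℤ) (L : ℕ) :
    seg w i L = (List.range L).map (fun j : ℕ => w (i + (j : ℤ))) := by
  induction L with
  | zero => rfl
  | succ L ih =>
      simp only [seg, List.range_succ, List.flatMap_append, List.map_append] at ih ⊢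
      simp_all

lemma seg_length {A : Type} (w : ℤ → A) (i : ℤ) (L : ℕ) : (seg w i L).length = L := by
  rw [seg_eq, List.length_map, List.length_range]

lemma seg_getElem {A : Type} (w : ℤ → A) (i : ℤ) (L : ℕ) (k : ℕ) (hk : k < (seg w i L).length) :
    (seg w i L)[k] = w (i + k) := by
  simp only [seg_eq, List.getElem_map, List.getElem_range]

lemma isFactor_iff {A : Type} (w : ℤ → A) (u : List A) :
    IsFactor w u ↔ ∃ i, u = seg w i u.length := Iff.rfl

lemma factor_infix {A : Type} (w : ℤ → A) {u v : List A} (hv : v <:+: u)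
    (hu : IsFactor w u) : IsFactor w v := by
  rw [isFactor_iff] at hu ⊢
  obtain ⟨i, hi⟩ := hu
  obtain ⟨s, t, hst⟩ := hv
  refine ⟨i + s.length, ?_⟩
  apply List.ext_getElem (by rw [seg_length])
  intro k h1 h2
  have hlen : v.length ≤ u.length := by
    rw [← hst]; simp; omega
  have hk2 : s.length + k < u.length := by
    rw [← hst]; simp; omega
  have hk2' : s.length + k < (s ++ v ++ t).length := by simp; omega
  have e1 : (s ++ v ++ t)[s.length + k]'hk2' = v[k]'h1 := by
    rw [List.getElem_append_left (by simp; omega),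
        List.getElem_append_right (by omega)]
    congr 1
    omega
  have e2 : (s ++ v ++ t)[s.length + k]'hk2' = (seg w i u.length)[s.length + k]'(by
      rw [seg_length]; omega) := List.getElem_of_eq (hst.trans hi) _
  rw [seg_getElem]
  rw [← e1, e2, seg_getElem]
  congr 1
  push_cast
  ring

lemma factors_subset {A : Type} (w w' : ℤ → A)
    (h : ∀ u, MinForbidden w u → ¬ IsFactor w' u) :
    ∀ u : List A, IsFactor w' u → IsFactor w u := by
  have main : ∀ L : ℕ, ∀ u : List A, u.length = L → IsFactor w' u → IsFactor w u := by
    intro L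
    induction L using Nat.strong_induction_on with
    | _ L ih =>
      intro u hlen hu
      by_contra hnf
      refine h u ⟨hnf, ?_⟩ hu
      intro v hv hne
      have hvlt : v.length < u.length := by
        rcases lt_or_eq_of_le hv.length_le with h1 | h1
        · exact h1
        · exact absurd (hv.sublist.eq_of_length h1) hne
      exact ih v.length (hlen ▸ hvlt) v rfl (factor_infix w' hv hu)
  exact fun u => main u.length u rfl

lemma period_add_mul {A : Type} (w : ℤ → A) (n : ℕ) (hp : HasPeriod w n) :
    ∀ (k i : ℤ), w (i + k * n) = w i := by
  intro k
  induction k using Int.induction_on with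
  | zero => simp
  | succ k ih =>
      intro i
      have h1 : i + ((k : ℤ) + 1) * n = (i + k * n) + n := by ring
      rw [h1, hp, ih]
  | pred k ih =>
      intro i
      have h1 : i + (-(k : ℤ)) * n = (i + (-(k : ℤ) - 1) * n) + n := by ring
      have := ih i
      rw [h1, hp] at this
      exact this

theorem minimal_forbidden_words_define {A : Type} [Fintype A]
    (w : ℤ → A) (n : ℕ) (hn : 1 ≤ n) (hp : HasPeriod w n) :
    Defines {u : List A | MinForbidden w u} w := by
  constructor
  · intro u hu
    exact hu.1
  · intro w' hw'
    have hsub : ∀ u, IsFactor w' u → IsFactor w u :=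
      factors_subset w w' (fun u hu => hw' u hu)
    have hn0 : (0 : ℤ) < n := by exact_mod_cast hn
    have key : ∀ k : ℕ, ∃ s : ℤ, 0 ≤ s ∧ s < n ∧
        ∀ j : ℤ, -(k : ℤ) ≤ j → j ≤ k → w' j = w (j + s) := by
      intro k
      have hf : IsFactor w' (seg w' (-(k : ℤ)) (2 * k + 1)) :=
        ⟨-(k : ℤ), by rw [seg_length]; rfl⟩
      have hfac := hsub _ hf
      rw [isFactor_iff, seg_length] at hfac
      obtain ⟨i, hi⟩ := hfac
      refine ⟨(i + k) % n, Int.emod_nonneg _ (by omega), Int.emod_lt_of_pos _ hn0, ?_⟩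
      intro j hj1 hj2
      have hm : (j + k).toNat < 2 * k + 1 := by omega
      have e1 : (seg w' (-(k : ℤ)) (2 * k + 1))[(j + k).toNat]'(by rw [seg_length]; exact hm)
          = (seg w i (2 * k + 1))[(j + k).toNat]'(by rw [seg_length]; exact hm) :=
        List.getElem_of_eq hi _
      rw [seg_getElem, seg_getElem] at e1
      have hcast : ((j + k).toNat : ℤ) = j + k := Int.toNat_of_nonneg (by omega)
      rw [hcast] at e1
      have e2 : w' j = w (i + k + j) := by
        have h1 : -(k : ℤ) + (j + k) = j := by ring
        have h2 : i + (j + k) = i + k + j := by ring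
        rw [h1, h2] at e1
        exact e1
      rw [e2]
      have hper := period_add_mul w n hp ((i + k) / n) (j + (i + k) % n)
      have hdm := Int.mul_ediv_add_emod (i + k) n
      rw [mul_comm] at hdm
      have heq : i + k + j = j + (i + k) % n + (i + k) / n * n := by linarith
      rw [heq, hper]
    choose s hs0 hsn hsw using key
    let f : ℕ → Fin n := fun k => ⟨(s k).toNat, by have := hs0 k; have := hsn k; omega⟩
    obtain ⟨y, hy'⟩ := Finite.exists_infinite_fiber f
    have hy := Set.infinite_coe_iff.mp hy'
    refine ⟨(y : ℤ), ?_⟩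
    intro j
    obtain ⟨k, hk, hkgt⟩ := hy.exists_gt j.natAbs
    have hfk : f k = y := hk
    have hsk : s k = (y : ℤ) := by
      have h1 : (s k).toNat = (y : ℕ) := congrArg Fin.val hfk
      have := hs0 k
      omega
    rw [← hsk]
    exact hsw k j (by omega) (by omega)
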